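/- If D is an n-vertex digraph, then the multiplicity of −1 as a root of A_D(t) is at most n − s_2(n), where s_2(n) is the number of 1's in the binary expansion of n. Moreover, for every n there exists an n-vertex digraph D with A_D(t) = (n!/2^{n−s_2(n)}) · (1+t)^{n−s_2(n)}. -/

import Mathlib

open Polynomial

/-- Number of `D`-descents of the labeling `σ`: arcs `(u,v)` with `σ u > σ v`. -/
noncomputable def desD {V : Type*} [Fintype V] (D : V → V → Prop)
    (σ : V ≃ Fin (Fintype.card V)) : ℕ :=
  Nat.card {p : V × V // D p.1 p.2 ∧ σ p.2 < σ p.1}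

/-- The Eulerian polynomial of a digraph `D`. -/
noncomputable def eulerianPoly (V : Type*) [Fintype V] [DecidableEq V]
    (D : V → V → Prop) : Polynomial ℤ :=
  ∑ σ : V ≃ Fin (Fintype.card V), X ^ desD D σ

lemma euler_eval_one (V : Type*) [Fintype V] [DecidableEq V] (D : V → V → Prop) :
    (eulerianPoly V D).eval 1 = (Fintype.card V).factorial := by
  simp only [eulerianPoly, eval_finset_sum, eval_pow, eval_X, one_pow]
  rw [Finset.sum_const, Finset.card_univ, Fintype.card_equiv (Fintype.equivFin V)]
  simp

lemma part1 (n : ℕ) (V : Type) [Fintype V] [DecidableEq V] (D : V → V → Prop)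
    (hcard : Fintype.card V = n) :
    (eulerianPoly V D).rootMultiplicity (-1) ≤ n - (Nat.digits 2 n).sum := by
  set m := (eulerianPoly V D).rootMultiplicity (-1) with hm
  have hdvd : (X - C (-1 : ℤ)) ^ m ∣ eulerianPoly V D := pow_rootMultiplicity_dvd _ _
  obtain ⟨c, hc⟩ := hdvd
  have h2 : (2 : ℤ) ^ m ∣ ((n.factorial : ℤ)) := by
    refine ⟨c.eval 1, ?_⟩
    have := congrArg (eval (1:ℤ)) hc
    rw [euler_eval_one, hcard] at this
    simpa using this
  have h2' : (2 : ℕ) ^ m ∣ n.factorial := by exact_mod_cast h2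
  have hfact : n.factorial ≠ 0 := Nat.factorial_ne_zero n
  have hle : m ≤ (n.factorial).factorization 2 :=
    (Nat.Prime.pow_dvd_iff_le_factorization Nat.prime_two hfact).1 h2'
  have hleg : (n.factorial).factorization 2 = n - (Nat.digits 2 n).sum := by
    have : Fact (Nat.Prime 2) := ⟨Nat.prime_two⟩
    have h := sub_one_mul_padicValNat_factorial (p := 2) n
    rw [← h]
    rw [Nat.factorization_def _ Nat.prime_two]
    simp
  omega

lemma desD_congr {V W : Type*} [Fintype V] [DecidableEq V] [Fintype W] [DecidableEq W]
    (e : V ≃ W) (D : W → W → Prop) (σ : V ≃ Fin (Fintype.card V)) :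
    desD (fun a b => D (e a) (e b)) σ
      = desD D ((e.symm.trans σ).trans (finCongr (Fintype.card_congr e))) := by
  apply Nat.card_congr
  refine Equiv.subtypeEquiv (Equiv.prodCongr e e) ?_
  rintro ⟨a, b⟩
  simp only [Equiv.prodCongr_apply, Prod.map, Equiv.trans_apply, Equiv.symm_apply_apply,
    finCongr_apply, and_congr_right_iff, Fin.lt_def, Fin.coe_cast]

lemma euler_congr {V W : Type*} [Fintype V] [DecidableEq V] [Fintype W] [DecidableEq W]
    (e : V ≃ W) (D : W → W → Prop) :
    eulerianPoly V (fun a b => D (e a) (e b)) = eulerianPoly W D := by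
  unfold eulerianPoly
  refine Fintype.sum_equiv
    ⟨fun σ => (e.symm.trans σ).trans (finCongr (Fintype.card_congr e)),
     fun τ => (e.trans τ).trans (finCongr (Fintype.card_congr e).symm),
     fun σ => by ext x; simp,
     fun τ => by ext x; simp⟩
    (fun σ => X ^ desD (fun a b => D (e a) (e b)) σ) (fun τ => X ^ desD D τ) ?_
  intro σ
  show X ^ desD (fun a b => D (e a) (e b)) σ = X ^ desD D ((e.symm.trans σ).trans (finCongr (Fintype.card_congr e)))
  rw [desD_congr e D σ]

def sumD {V W : Type*} (D₁ : V → V → Prop) (D₂ : W → W → Prop) : V ⊕ W → V ⊕ W → Prop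
  | Sum.inl a, Sum.inl b => D₁ a b
  | Sum.inr a, Sum.inr b => D₂ a b
  | _, _ => False

section prodlemma
variable {V W : Type*} [Fintype V] [DecidableEq V] [Fintype W] [DecidableEq W]

def desSplitEquiv (D₁ : V → V → Prop) (D₂ : W → W → Prop)
    (σ : V ⊕ W ≃ Fin (Fintype.card (V ⊕ W)))
    (π₁ : V ≃ Fin (Fintype.card V)) (π₂ : W ≃ Fin (Fintype.card W))
    (h₁ : ∀ a b : V, σ (Sum.inl b) < σ (Sum.inl a) ↔ π₁ b < π₁ a)
    (h₂ : ∀ a b : W, σ (Sum.inr b) < σ (Sum.inr a) ↔ π₂ b < π₂ a) :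
    {p : (V ⊕ W) × (V ⊕ W) // sumD D₁ D₂ p.1 p.2 ∧ σ p.2 < σ p.1}
      ≃ {p : V × V // D₁ p.1 p.2 ∧ π₁ p.2 < π₁ p.1}
        ⊕ {p : W × W // D₂ p.1 p.2 ∧ π₂ p.2 < π₂ p.1} where
  toFun := fun q => match q with
    | ⟨(Sum.inl a, Sum.inl b), h⟩ => Sum.inl ⟨(a, b), ⟨h.1, (h₁ a b).1 h.2⟩⟩
    | ⟨(Sum.inr a, Sum.inr b), h⟩ => Sum.inr ⟨(a, b), ⟨h.1, (h₂ a b).1 h.2⟩⟩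
    | ⟨(Sum.inl _, Sum.inr _), h⟩ => h.1.elim
    | ⟨(Sum.inr _, Sum.inl _), h⟩ => h.1.elim
  invFun := fun s => match s with
    | Sum.inl ⟨(a, b), h⟩ => ⟨(Sum.inl a, Sum.inl b), ⟨h.1, (h₁ a b).2 h.2⟩⟩
    | Sum.inr ⟨(a, b), h⟩ => ⟨(Sum.inr a, Sum.inr b), ⟨h.1, (h₂ a b).2 h.2⟩⟩
  left_inv := by rintro ⟨⟨x | x, y | y⟩, h⟩ <;> first | rfl | exact h.1.elim
  right_inv := by rintro (⟨⟨a, b⟩, h⟩ | ⟨⟨a, b⟩, h⟩) <;> rfl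

lemma desD_sumD (D₁ : V → V → Prop) (D₂ : W → W → Prop)
    (σ : V ⊕ W ≃ Fin (Fintype.card (V ⊕ W)))
    (π₁ : V ≃ Fin (Fintype.card V)) (π₂ : W ≃ Fin (Fintype.card W))
    (h₁ : ∀ a b : V, σ (Sum.inl b) < σ (Sum.inl a) ↔ π₁ b < π₁ a)
    (h₂ : ∀ a b : W, σ (Sum.inr b) < σ (Sum.inr a) ↔ π₂ b < π₂ a) :
    desD (sumD D₁ D₂) σ = desD D₁ π₁ + desD D₂ π₂ := by
  unfold desD
  rw [← Nat.card_sum]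
  exact Nat.card_congr (desSplitEquiv D₁ D₂ σ π₁ π₂ h₁ h₂)

lemma compl_card (S : Finset (Fin (Fintype.card (V ⊕ W)))) (hS : S.card = Fintype.card V) :
    Sᶜ.card = Fintype.card W := by
  have h := Fintype.card_sum (α := V) (β := W)
  rw [Finset.card_compl, hS]
  simp [h]

noncomputable def buildPerm (S : Finset (Fin (Fintype.card (V ⊕ W))))
    (hS : S.card = Fintype.card V)
    (π₁ : V ≃ Fin (Fintype.card V)) (π₂ : W ≃ Fin (Fintype.card W)) :
    (V ⊕ W) ≃ Fin (Fintype.card (V ⊕ W)) :=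
  (Equiv.sumCongr π₁ π₂).trans <|
    (Equiv.sumCongr (S.orderIsoOfFin hS).toEquiv
      (((Sᶜ).orderIsoOfFin (compl_card S hS)).toEquiv.trans
        (Equiv.subtypeEquivRight (fun x => Finset.mem_compl)))).trans <|
    Equiv.sumCompl (· ∈ S)

lemma buildPerm_inl (S : Finset (Fin (Fintype.card (V ⊕ W))))
    (hS : S.card = Fintype.card V)
    (π₁ : V ≃ Fin (Fintype.card V)) (π₂ : W ≃ Fin (Fintype.card W)) (v : V) :
    buildPerm S hS π₁ π₂ (Sum.inl v) = (S.orderIsoOfFin hS (π₁ v) : Fin _) := rfl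

lemma buildPerm_inr (S : Finset (Fin (Fintype.card (V ⊕ W))))
    (hS : S.card = Fintype.card V)
    (π₁ : V ≃ Fin (Fintype.card V)) (π₂ : W ≃ Fin (Fintype.card W)) (w : W) :
    buildPerm S hS π₁ π₂ (Sum.inr w) = ((Sᶜ).orderIsoOfFin (compl_card S hS) (π₂ w) : Fin _) := rfl

lemma buildPerm_injective :
    Function.Injective (fun p : {S : Finset (Fin (Fintype.card (V ⊕ W))) // S.card = Fintype.card V}
        × ((V ≃ Fin (Fintype.card V)) × (W ≃ Fin (Fintype.card W))) =>
      buildPerm p.1.1 p.1.2 p.2.1 p.2.2) := by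
  have hrange : ∀ (T : Finset (Fin (Fintype.card (V ⊕ W)))) (hT : T.card = Fintype.card V)
      (ρ₁ : V ≃ Fin (Fintype.card V)) (ρ₂ : W ≃ Fin (Fintype.card W))
      (x : Fin (Fintype.card (V ⊕ W))),
      (∃ v, buildPerm T hT ρ₁ ρ₂ (Sum.inl v) = x) ↔ x ∈ T := by
    intro T hT ρ₁ ρ₂ x
    constructor
    · rintro ⟨v, rfl⟩
      rw [buildPerm_inl]
      exact ((T.orderIsoOfFin hT) (ρ₁ v)).2
    · intro hx
      refine ⟨ρ₁.symm ((T.orderIsoOfFin hT).symm ⟨x, hx⟩), ?_⟩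
      rw [buildPerm_inl]
      simp
  rintro ⟨⟨S, hS⟩, π₁, π₂⟩ ⟨⟨S', hS'⟩, π₁', π₂'⟩ heq
  simp only at heq
  have hSS : S = S' := by
    ext x
    rw [← hrange S hS π₁ π₂ x, ← hrange S' hS' π₁' π₂' x, heq]
  subst hSS
  have h1 : π₁ = π₁' := by
    ext v
    have h := congrArg (fun (e : (V ⊕ W) ≃ Fin (Fintype.card (V ⊕ W))) => e (Sum.inl v)) heq
    simp only [buildPerm_inl] at h
    exact congrArg Fin.val ((S.orderIsoOfFin hS).injective (Subtype.coe_injective h))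
  have h2 : π₂ = π₂' := by
    ext w
    have h := congrArg (fun (e : (V ⊕ W) ≃ Fin (Fintype.card (V ⊕ W))) => e (Sum.inr w)) heq
    simp only [buildPerm_inr] at h
    exact congrArg Fin.val (((Sᶜ).orderIsoOfFin (compl_card S hS)).injective (Subtype.coe_injective h))
  rw [h1, h2]

lemma buildPerm_bijective :
    Function.Bijective (fun p : {S : Finset (Fin (Fintype.card (V ⊕ W))) // S.card = Fintype.card V}
        × ((V ≃ Fin (Fintype.card V)) × (W ≃ Fin (Fintype.card W))) =>
      buildPerm p.1.1 p.1.2 p.2.1 p.2.2) := by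
  rw [Fintype.bijective_iff_injective_and_card]
  refine ⟨buildPerm_injective, ?_⟩
  rw [Fintype.card_prod, Fintype.card_prod, Fintype.card_finset_len,
    Fintype.card_equiv (Fintype.equivFin V), Fintype.card_equiv (Fintype.equivFin W),
    Fintype.card_equiv (Fintype.equivFin (V ⊕ W)), Fintype.card_fin, Fintype.card_sum]
  rw [← Nat.add_choose_mul_factorial_mul_factorial (Fintype.card V) (Fintype.card W),
    Nat.choose_symm_add]
  ring

lemma buildPerm_lt_inl (S : Finset (Fin (Fintype.card (V ⊕ W)))) (hS : S.card = Fintype.card V)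
    (π₁ : V ≃ Fin (Fintype.card V)) (π₂ : W ≃ Fin (Fintype.card W)) (a b : V) :
    buildPerm S hS π₁ π₂ (Sum.inl b) < buildPerm S hS π₁ π₂ (Sum.inl a) ↔ π₁ b < π₁ a := by
  rw [buildPerm_inl, buildPerm_inl, Subtype.coe_lt_coe, OrderIso.lt_iff_lt]

lemma buildPerm_lt_inr (S : Finset (Fin (Fintype.card (V ⊕ W)))) (hS : S.card = Fintype.card V)
    (π₁ : V ≃ Fin (Fintype.card V)) (π₂ : W ≃ Fin (Fintype.card W)) (a b : W) :
    buildPerm S hS π₁ π₂ (Sum.inr b) < buildPerm S hS π₁ π₂ (Sum.inr a) ↔ π₂ b < π₂ a := by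
  rw [buildPerm_inr, buildPerm_inr, Subtype.coe_lt_coe, OrderIso.lt_iff_lt]

lemma euler_sumD (D₁ : V → V → Prop) (D₂ : W → W → Prop) :
    eulerianPoly (V ⊕ W) (sumD D₁ D₂)
      = C (((Fintype.card V + Fintype.card W).choose (Fintype.card V) : ℕ) : ℤ)
        * (eulerianPoly V D₁ * eulerianPoly W D₂) := by
  have key : eulerianPoly (V ⊕ W) (sumD D₁ D₂)
      = ∑ p : {S : Finset (Fin (Fintype.card (V ⊕ W))) // S.card = Fintype.card V}
          × ((V ≃ Fin (Fintype.card V)) × (W ≃ Fin (Fintype.card W))),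
          X ^ (desD D₁ p.2.1 + desD D₂ p.2.2) := by
    refine (Fintype.sum_bijective _ buildPerm_bijective _ _ ?_).symm
    intro p
    rw [desD_sumD D₁ D₂ _ p.2.1 p.2.2 (buildPerm_lt_inl p.1.1 p.1.2 p.2.1 p.2.2)
      (buildPerm_lt_inr p.1.1 p.1.2 p.2.1 p.2.2)]
  rw [key, Fintype.sum_prod_type]
  have inner : ∀ _s : {S : Finset (Fin (Fintype.card (V ⊕ W))) // S.card = Fintype.card V},
      (∑ q : (V ≃ Fin (Fintype.card V)) × (W ≃ Fin (Fintype.card W)),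
        X ^ (desD D₁ q.1 + desD D₂ q.2) : Polynomial ℤ)
      = eulerianPoly V D₁ * eulerianPoly W D₂ := by
    intro _s
    rw [Fintype.sum_prod_type]
    unfold eulerianPoly
    rw [Finset.sum_mul_sum]
    simp [pow_add]
  rw [Finset.sum_congr rfl (fun s _ => inner s), Finset.sum_const, Finset.card_univ,
    Fintype.card_finset_len, Fintype.card_fin, Fintype.card_sum, nsmul_eq_mul]
  norm_cast

def dblD (D : V → V → Prop) (b : V) : V ⊕ V → V ⊕ V → Prop :=
  fun x y => sumD D D x y ∨ (x = Sum.inl b ∧ y = Sum.inr b)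

omit [DecidableEq V] in
lemma desD_dblD (D : V → V → Prop) (b : V) (σ : (V ⊕ V) ≃ Fin (Fintype.card (V ⊕ V))) :
    desD (dblD D b) σ
      = desD (sumD D D) σ + (if σ (Sum.inr b) < σ (Sum.inl b) then 1 else 0) := by
  classical
  unfold desD
  have e1 : {p : (V ⊕ V) × (V ⊕ V) // dblD D b p.1 p.2 ∧ σ p.2 < σ p.1}
      ≃ {p : (V ⊕ V) × (V ⊕ V) // (sumD D D p.1 p.2 ∧ σ p.2 < σ p.1)
          ∨ ((p.1 = Sum.inl b ∧ p.2 = Sum.inr b) ∧ σ p.2 < σ p.1)} :=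
    Equiv.subtypeEquivRight (fun p => by unfold dblD; tauto)
  have e2 := subtypeOrEquiv
    (fun p : (V ⊕ V) × (V ⊕ V) => sumD D D p.1 p.2 ∧ σ p.2 < σ p.1)
    (fun p => (p.1 = Sum.inl b ∧ p.2 = Sum.inr b) ∧ σ p.2 < σ p.1)
    (by
      rw [Pi.disjoint_iff]
      intro p
      rw [disjoint_iff]
      by_cases h : p.1 = Sum.inl b ∧ p.2 = Sum.inr b
      · obtain ⟨h1, h2⟩ := h
        have : ¬ sumD D D p.1 p.2 := by rw [h1, h2]; rintro ⟨⟩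
        simp only [Prop.bot_eq_false, inf_Prop_eq, eq_iff_iff, iff_false]
        tauto
      · simp only [Prop.bot_eq_false, inf_Prop_eq, eq_iff_iff, iff_false]
        tauto)
  rw [Nat.card_congr (e1.trans e2), Nat.card_sum]
  congr 1
  by_cases hc : σ (Sum.inr b) < σ (Sum.inl b)
  · rw [if_pos hc]
    have : {p : (V ⊕ V) × (V ⊕ V) // (p.1 = Sum.inl b ∧ p.2 = Sum.inr b) ∧ σ p.2 < σ p.1}
        ≃ PUnit.{1} :=
      ⟨fun _ => PUnit.unit, fun _ => ⟨(Sum.inl b, Sum.inr b), ⟨rfl, rfl⟩, hc⟩,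
       by rintro ⟨⟨x, y⟩, ⟨h1, h2⟩, h3⟩; cases h1; cases h2; rfl, fun u => rfl⟩
    rw [Nat.card_congr this]; simp
  · rw [if_neg hc]
    have : IsEmpty {p : (V ⊕ V) × (V ⊕ V) // (p.1 = Sum.inl b ∧ p.2 = Sum.inr b) ∧ σ p.2 < σ p.1} := by
      constructor
      rintro ⟨⟨x, y⟩, ⟨h1, h2⟩, h3⟩
      cases h1; cases h2; exact hc h3
    simp [Nat.card_of_isEmpty]

omit [DecidableEq V] in
lemma desD_sumD_swap (D : V → V → Prop) (σ : (V ⊕ V) ≃ Fin (Fintype.card (V ⊕ V))) :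
    desD (sumD D D) ((Equiv.sumComm V V).trans σ) = desD (sumD D D) σ := by
  apply Nat.card_congr
  refine Equiv.subtypeEquiv (Equiv.prodCongr (Equiv.sumComm V V) (Equiv.sumComm V V)) ?_
  rintro ⟨x | x, y | y⟩ <;>
    simp only [Equiv.prodCongr_apply, Prod.map, Equiv.sumComm_apply, Sum.swap_inl, Sum.swap_inr,
      Equiv.trans_apply] <;> rfl

omit [DecidableEq V] in
lemma swap_ne (b : V) (σ : (V ⊕ V) ≃ Fin (Fintype.card (V ⊕ V))) :
    σ (Sum.inl b) ≠ σ (Sum.inr b) := by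
  intro h
  exact Sum.inl_ne_inr (σ.injective h)

lemma euler_dblD (D : V → V → Prop) (b : V) :
    (2 : Polynomial ℤ) * eulerianPoly (V ⊕ V) (dblD D b)
      = (1 + X) * eulerianPoly (V ⊕ V) (sumD D D) := by
  have swapEq : (∑ σ : (V ⊕ V) ≃ Fin (Fintype.card (V ⊕ V)),
        X ^ desD (dblD D b) ((Equiv.sumComm V V).trans σ) : Polynomial ℤ)
      = eulerianPoly (V ⊕ V) (dblD D b) := by
    unfold eulerianPoly
    exact Fintype.sum_equiv
      ⟨fun σ => (Equiv.sumComm V V).trans σ, fun σ => (Equiv.sumComm V V).trans σ,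
       fun σ => by ext x; simp, fun σ => by ext x; simp⟩ _ _ (fun σ => rfl)
  have two_eq : (2 : Polynomial ℤ) * eulerianPoly (V ⊕ V) (dblD D b)
      = ∑ σ : (V ⊕ V) ≃ Fin (Fintype.card (V ⊕ V)),
          (X ^ desD (dblD D b) σ + X ^ desD (dblD D b) ((Equiv.sumComm V V).trans σ)) := by
    rw [Finset.sum_add_distrib, swapEq, two_mul]
    rfl
  rw [two_eq]
  unfold eulerianPoly
  rw [Finset.mul_sum]
  refine Finset.sum_congr rfl (fun σ _ => ?_)
  rw [desD_dblD, desD_dblD, desD_sumD_swap]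
  have h1 : ((Equiv.sumComm V V).trans σ) (Sum.inr b) = σ (Sum.inl b) := rfl
  have h2 : ((Equiv.sumComm V V).trans σ) (Sum.inl b) = σ (Sum.inr b) := rfl
  rw [h1, h2]
  rcases lt_or_gt_of_ne (swap_ne b σ) with hlt | hlt
  · rw [if_neg (asymm hlt), if_pos hlt]
    ring
  · rw [if_pos hlt, if_neg (asymm hlt)]
    ring
end prodlemma

lemma digitsum_pow_add : ∀ (k r : ℕ), r < 2 ^ k →
    (Nat.digits 2 (2 ^ k + r)).sum = 1 + (Nat.digits 2 r).sum := by
  intro k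
  induction k with
  | zero =>
    intro r hr
    interval_cases r
    simp
  | succ k ih =>
    intro r hr
    have hne : 2 ^ (k + 1) + r ≠ 0 := by positivity
    rw [Nat.digits_def' (by norm_num : 1 < 2) (by positivity), List.sum_cons]
    have hmod : (2 ^ (k + 1) + r) % 2 = r % 2 := by omega
    have hdiv : (2 ^ (k + 1) + r) / 2 = 2 ^ k + r / 2 := by omega
    rw [hmod, hdiv, ih (r / 2) (by omega)]
    rcases Nat.eq_zero_or_pos r with h0 | hpos
    · subst h0; simp
    · rw [Nat.digits_def' (by norm_num : 1 < 2) hpos, List.sum_cons]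
      omega

lemma euler_false (V : Type*) [Fintype V] [DecidableEq V] :
    eulerianPoly V (fun _ _ => False) = C ((Fintype.card V).factorial : ℤ) := by
  unfold eulerianPoly
  have hd : ∀ σ : V ≃ Fin (Fintype.card V), desD (fun _ _ => False) σ = 0 := by
    intro σ
    have : IsEmpty {p : V × V // False ∧ σ p.2 < σ p.1} := ⟨fun q => q.2.1⟩
    simp [desD, Nat.card_of_isEmpty]
  simp only [hd, pow_zero]
  rw [Finset.sum_const, Finset.card_univ, Fintype.card_equiv (Fintype.equivFin V)]
  simp [Polynomial.C_eq_natCast]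

lemma sumD_loopless {V W : Type*} {D₁ : V → V → Prop} {D₂ : W → W → Prop}
    (h₁ : ∀ v, ¬ D₁ v v) (h₂ : ∀ w, ¬ D₂ w w) : ∀ z, ¬ sumD D₁ D₂ z z := by
  rintro (z | z) h
  · exact h₁ z h
  · exact h₂ z h

lemma dblD_loopless {V : Type*} {D : V → V → Prop} {b : V}
    (h : ∀ v, ¬ D v v) : ∀ z, ¬ dblD D b z z := by
  rintro z (hs | ⟨h1, h2⟩)
  · exact sumD_loopless h h z hs
  · rw [h1] at h2
    exact Sum.inl_ne_inr h2

lemma goodPow : ∀ k : ℕ, ∃ (D : Fin (2 ^ k) → Fin (2 ^ k) → Prop) (a : ℕ),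
    (∀ v, ¬ D v v) ∧
    eulerianPoly (Fin (2 ^ k)) D = C (a : ℤ) * (1 + X) ^ (2 ^ k - 1) ∧
    a * 2 ^ (2 ^ k - 1) = (2 ^ k).factorial := by
  intro k
  induction k with
  | zero =>
    refine ⟨fun _ _ => False, 1, fun v h => h, ?_, by simp⟩
    rw [euler_false]
    simp
  | succ k ih =>
    obtain ⟨D, a, hl, hA, ha⟩ := ih
    have hpos : 0 < 2 ^ k := pow_pos (by norm_num) k
    set b : Fin (2 ^ k) := ⟨0, hpos⟩
    -- the doubled digraph on the sum type
    have hdbl := euler_dblD D b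
    have hsum := euler_sumD D D
    rw [hA] at hsum
    rw [hsum] at hdbl
    -- choose is even
    obtain ⟨m, hm⟩ : ∃ m, 2 ^ k = m + 1 := ⟨2 ^ k - 1, by omega⟩
    have hchoose : (Fintype.card (Fin (2 ^ k)) + Fintype.card (Fin (2 ^ k))).choose
        (Fintype.card (Fin (2 ^ k))) = 2 * ((2 * m + 1).choose (m + 1)) := by
      simp only [Fintype.card_fin, hm]
      have h1 : m + 1 + (m + 1) = (2 * m + 1) + 1 := by ring
      rw [h1, Nat.choose_succ_succ]
      have h2 : (2 * m + 1).choose m = (2 * m + 1).choose (m + 1) := by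
        have h3 := Nat.choose_symm (n := 2 * m + 1) (k := m + 1) (by omega)
        rw [show 2 * m + 1 - (m + 1) = m by omega] at h3
        exact h3
      simp only [Nat.succ_eq_add_one]
      omega
    set e : ℕ := (2 * m + 1).choose (m + 1)
    set a' : ℕ := e * a ^ 2
    have key : eulerianPoly (Fin (2 ^ k) ⊕ Fin (2 ^ k)) (dblD D b)
        = C (a' : ℤ) * (1 + X) ^ (2 ^ (k + 1) - 1) := by
      have h2 : (2 : Polynomial ℤ) ≠ 0 := by norm_num
      apply mul_left_cancel₀ h2
      rw [hdbl, hchoose]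
      have hexp : 2 ^ (k + 1) - 1 = 1 + ((2 ^ k - 1) + (2 ^ k - 1)) := by
        have : 2 ^ (k + 1) = 2 ^ k + 2 ^ k := by ring
        omega
      rw [hexp]
      push_cast [a']
      simp only [map_mul, map_pow, map_ofNat]
      ring
    have h2n : 2 ^ k + 2 ^ k = 2 ^ (k + 1) := by ring
    have hch : (2 ^ k + 2 ^ k).choose (2 ^ k) = 2 * e := by simpa using hchoose
    have hexp : 2 ^ (k + 1) - 1 = 1 + ((2 ^ k - 1) + (2 ^ k - 1)) := by omega
    have hnum : a' * 2 ^ (2 ^ (k + 1) - 1) = (2 ^ (k + 1)).factorial := by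
      have hfac := Nat.add_choose_mul_factorial_mul_factorial (2 ^ k) (2 ^ k)
      have step : a' * 2 ^ (2 ^ (k + 1) - 1)
          = ((2 ^ k + 2 ^ k).choose (2 ^ k)) * ((a * 2 ^ (2 ^ k - 1)) * (a * 2 ^ (2 ^ k - 1))) := by
        rw [hexp, hch]
        ring
      rw [step, ha, ← h2n, ← hfac]
      ring
    have hEquiv : Fin (2 ^ (k + 1)) ≃ (Fin (2 ^ k) ⊕ Fin (2 ^ k)) :=
      (finCongr h2n.symm).trans finSumFinEquiv.symm
    refine ⟨fun x y => dblD D b (hEquiv x) (hEquiv y), a', ?_, ?_, hnum⟩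
    · intro v h
      exact dblD_loopless hl (hEquiv v) h
    · rw [euler_congr hEquiv (dblD D b), key]

lemma good : ∀ n : ℕ, ∃ (D : Fin n → Fin n → Prop) (a : ℕ),
    (∀ v, ¬ D v v) ∧
    eulerianPoly (Fin n) D = C (a : ℤ) * (1 + X) ^ (n - (Nat.digits 2 n).sum) ∧
    a * 2 ^ (n - (Nat.digits 2 n).sum) = n.factorial := by
  intro n
  induction n using Nat.strong_induction_on with
  | _ n ih =>
  rcases Nat.eq_zero_or_pos n with rfl | hn
  · refine ⟨fun _ _ => False, 1, fun v h => h, ?_, by simp⟩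
    rw [euler_false]
    simp
  · set k := Nat.log 2 n with hk
    have h1 : 2 ^ k ≤ n := Nat.pow_log_le_self 2 (by omega)
    have h2 : n < 2 ^ (k + 1) := Nat.lt_pow_succ_log_self (by norm_num) n
    set r := n - 2 ^ k with hr_def
    have hpos : 0 < 2 ^ k := pow_pos (by norm_num) _
    have hrlt : r < 2 ^ k := by
      have hsp : 2 ^ (k + 1) = 2 ^ k + 2 ^ k := by ring
      omega
    have hn_eq : n = 2 ^ k + r := by omega
    obtain ⟨E, a₁, hlE, hAE, haE⟩ := goodPow k
    obtain ⟨Dr, a₂, hlr, hAr, har⟩ := ih r (by omega)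
    have hsum := euler_sumD E Dr
    rw [hAE, hAr] at hsum
    have hds : (Nat.digits 2 n).sum = 1 + (Nat.digits 2 r).sum := by
      rw [hn_eq]; exact digitsum_pow_add k r hrlt
    have hdl : (Nat.digits 2 r).sum ≤ r := Nat.digit_sum_le 2 r
    have hm_eq : n - (Nat.digits 2 n).sum = (2 ^ k - 1) + (r - (Nat.digits 2 r).sum) := by omega
    have hEquiv : Fin n ≃ (Fin (2 ^ k) ⊕ Fin r) := (finCongr hn_eq).trans finSumFinEquiv.symm
    refine ⟨fun x y => sumD E Dr (hEquiv x) (hEquiv y), n.choose (2 ^ k) * (a₁ * a₂), ?_, ?_, ?_⟩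
    · intro v h
      exact sumD_loopless hlE hlr (hEquiv v) h
    · rw [euler_congr hEquiv (sumD E Dr), hsum, hm_eq]
      simp only [Fintype.card_fin]
      rw [← hn_eq]
      push_cast
      simp only [map_mul]
      ring
    · have hfac := Nat.add_choose_mul_factorial_mul_factorial (2 ^ k) r
      have step : n.choose (2 ^ k) * (a₁ * a₂) * 2 ^ (n - (Nat.digits 2 n).sum)
          = n.choose (2 ^ k) * ((a₁ * 2 ^ (2 ^ k - 1)) * (a₂ * 2 ^ (r - (Nat.digits 2 r).sum))) := by
        rw [hm_eq]
        ring
      rw [step, haE, har, hn_eq, ← hfac, Nat.choose_symm_add]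
      ring

theorem stmt19 (n : ℕ) :
    (∀ (V : Type) [Fintype V] [DecidableEq V] (D : V → V → Prop),
      (∀ v, ¬ D v v) → Fintype.card V = n →
        (eulerianPoly V D).rootMultiplicity (-1) ≤ n - (Nat.digits 2 n).sum) ∧
    ∃ D : Fin n → Fin n → Prop, (∀ v, ¬ D v v) ∧
      eulerianPoly (Fin n) D =
        C ((n.factorial / 2 ^ (n - (Nat.digits 2 n).sum) : ℕ) : ℤ) *
          (1 + X) ^ (n - (Nat.digits 2 n).sum) := by
  constructor
  · intro V _ _ D _ hcard
    exact part1 n V D hcard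
  · obtain ⟨D, a, hl, hA, ha⟩ := good n
    refine ⟨D, hl, ?_⟩
    have hdiv : n.factorial / 2 ^ (n - (Nat.digits 2 n).sum) = a := by
      rw [← ha]
      exact Nat.mul_div_cancel a (pow_pos (by norm_num) _)
    rw [hdiv, hA]
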